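/- arXiv:2404.08503 — 3 statements merged into one kernel-verified Lean document; each statement's English description precedes it below -/
import Mathlib

section
/- A point x is K-Pareto critical (i.e., (−int K) ∩ Im(JF(x)) = ∅) if and only if h(x,d) ≥ 0 for all d ∈ ℝ^n. -/
open Set Metric

theorem critical_iff_h_nonneg {n m : ℕ}
    (K : Set (EuclideanSpace ℝ (Fin m)))
    (hKclosed : IsClosed K) (hKconv : Convex ℝ K)
    (hKcone : ∀ (c : ℝ), 0 ≤ c → ∀ x ∈ K, c • x ∈ K)
    (hKpointed : K ∩ (-K) ⊆ {0}) (hKint : (interior K).Nonempty)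
    (C : Set (EuclideanSpace ℝ (Fin m)))
    (hCne : C.Nonempty) (hCcomp : IsCompact C)
    (hCsub : C ⊆ {w | ∀ y ∈ K, 0 ≤ (inner ℝ y w : ℝ)} \ {0})
    (hCgen : {w | ∀ y ∈ K, 0 ≤ (inner ℝ y w : ℝ)} =
      {x | ∃ c : ℝ, 0 ≤ c ∧ ∃ z ∈ convexHull ℝ C, x = c • z})
    (F : EuclideanSpace ℝ (Fin n) → EuclideanSpace ℝ (Fin m))
    (hF : ContDiff ℝ 1 F)
    (h : EuclideanSpace ℝ (Fin n) → EuclideanSpace ℝ (Fin n) → ℝ)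
    (hh : ∀ x d, h x d = sSup ((fun w => (inner ℝ (fderiv ℝ F x d) w : ℝ)) '' C))
    (x : EuclideanSpace ℝ (Fin n)) :
    (-(interior K)) ∩ Set.range (fderiv ℝ F x) = ∅ ↔ ∀ d, 0 ≤ h x d := by
  set A := fderiv ℝ F x with hA
  -- K as a convex cone
  let KC : ConvexCone ℝ (EuclideanSpace ℝ (Fin m)) :=
    { carrier := K
      smul_mem' := fun c hc x hx => hKcone c hc.le x hx
      add_mem' := by
        intro a ha b hb
        have h2 : (1/2 : ℝ) • a + (1/2 : ℝ) • b ∈ K :=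
          hKconv ha hb (by norm_num) (by norm_num) (by norm_num)
        have := hKcone 2 (by norm_num) _ h2
        simpa [smul_add, smul_smul] using this }
  have hKCset : (KC : Set (EuclideanSpace ℝ (Fin m))) = K := rfl
  -- Lemma 1: interior points pair strictly positively with elements of C
  have lem1 : ∀ v ∈ interior K, ∀ w ∈ C, 0 < (inner ℝ v w : ℝ) := by
    intro v hv w hw
    obtain ⟨hwdual, hwne⟩ := hCsub hw
    have hwne' : w ≠ 0 := hwne
    have hwnorm : 0 < ‖w‖ := norm_pos_iff.2 hwne'
    obtain ⟨ε, hε, hball⟩ := Metric.isOpen_iff.1 isOpen_interior v hv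
    set t : ℝ := ε / (2 * ‖w‖) with ht
    have htpos : 0 < t := div_pos hε (by positivity)
    have hmem : v - t • w ∈ K := by
      apply interior_subset
      apply hball
      rw [mem_ball, dist_eq_norm]
      have : v - t • w - v = -(t • w) := by abel
      rw [this, norm_neg, norm_smul, Real.norm_eq_abs, abs_of_pos htpos]
      rw [ht, div_mul_eq_mul_div, mul_comm]
      rw [div_lt_iff₀ (by positivity)]
      nlinarith
    have h0 := hwdual _ hmem
    rw [inner_sub_left, real_inner_smul_left, real_inner_self_eq_norm_sq] at h0
    nlinarith [mul_pos htpos (pow_pos hwnorm 2)]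
  -- Lemma 2: if z pairs nonnegatively with every element of C, then z ∈ K
  have lem2 : ∀ z : EuclideanSpace ℝ (Fin m), (∀ w ∈ C, 0 ≤ (inner ℝ w z : ℝ)) → z ∈ K := by
    intro z hz
    have hKne : K.Nonempty := ⟨hKint.choose, interior_subset hKint.choose_spec⟩
    have hhull : ∀ u ∈ convexHull ℝ C, 0 ≤ (inner ℝ u z : ℝ) := by
      intro u hu
      have hlin : IsLinearMap ℝ (fun u : EuclideanSpace ℝ (Fin m) => (inner ℝ u z : ℝ)) :=
        ⟨fun a b => inner_add_left _ _ _, fun c a => real_inner_smul_left _ _ _⟩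
      have hcvx : Convex ℝ {u : EuclideanSpace ℝ (Fin m) | 0 ≤ (inner ℝ u z : ℝ)} :=
        convex_halfSpace_ge hlin 0
      exact convexHull_min hz hcvx hu
    by_contra hzK
    obtain ⟨f, u, hfK, hfz⟩ := geometric_hahn_banach_closed_point hKconv hKclosed hzK
    have h0K : (0 : EuclideanSpace ℝ (Fin m)) ∈ K := by
      simpa using hKcone 0 le_rfl _ hKne.choose_spec
    have hu : 0 < u := by simpa using hfK 0 h0K
    have hfle : ∀ a ∈ K, f a ≤ 0 := by
      intro a ha
      by_contra hpos
      push_neg at hpos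
      have := hfK ((u / f a) • a) (hKcone _ (div_pos hu hpos).le a ha)
      rw [map_smul, smul_eq_mul, div_mul_cancel₀ _ hpos.ne'] at this
      exact lt_irrefl _ this
    set g := (InnerProductSpace.toDual ℝ (EuclideanSpace ℝ (Fin m))).symm f with hgdef
    have hg : ∀ a, (inner ℝ g a : ℝ) = f a := fun a => InnerProductSpace.toDual_symm_apply
    have hw : -g ∈ {w | ∀ y ∈ K, 0 ≤ (inner ℝ y w : ℝ)} := by
      intro y hy
      rw [inner_neg_right, real_inner_comm, hg]
      linarith [hfle y hy]
    rw [hCgen] at hw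
    obtain ⟨c, hc, u', hu', hgeq⟩ := hw
    have h1 : (inner ℝ (-g) z : ℝ) = -f z := by rw [inner_neg_left, hg]
    rw [hgeq, real_inner_smul_left] at h1
    have := mul_nonneg hc (hhull u' hu')
    linarith
  constructor
  · -- criticality → h nonneg
    intro hemp d
    by_contra hneg
    push_neg at hneg
    rw [hh] at hneg
    have hcont : Continuous (fun w : EuclideanSpace ℝ (Fin m) => (inner ℝ (A d) w : ℝ)) :=
      continuous_const.inner continuous_id
    have hbdd : BddAbove ((fun w => (inner ℝ (A d) w : ℝ)) '' C) :=
      (hCcomp.image hcont).bddAbove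
    have hlt : ∀ w ∈ C, (inner ℝ (A d) w : ℝ) < 0 := fun w hw =>
      lt_of_le_of_lt (le_csSup hbdd ⟨w, hw, rfl⟩) hneg
    set y : EuclideanSpace ℝ (Fin m) := -(A d) with hy
    have hypos : ∀ w ∈ C, 0 < (inner ℝ y w : ℝ) := by
      intro w hw
      have := hlt w hw
      rw [hy, inner_neg_left]
      linarith
    -- minimum of ⟨y, ·⟩ over C
    have hconty : Continuous (fun w : EuclideanSpace ℝ (Fin m) => (inner ℝ y w : ℝ)) :=
      continuous_const.inner continuous_id
    obtain ⟨w₀, hw₀C, hmin⟩ := hCcomp.exists_isMinOn hCne hconty.continuousOn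
    set δ : ℝ := (inner ℝ y w₀ : ℝ) with hδ
    have hδpos : 0 < δ := hypos w₀ hw₀C
    -- norm bound on C
    obtain ⟨wM, hwMC, hmax⟩ := hCcomp.exists_isMaxOn hCne continuous_norm.continuousOn
    set M : ℝ := ‖wM‖ with hM
    have hM0 : 0 ≤ M := norm_nonneg _
    set r : ℝ := δ / (M + 1) with hr
    have hrpos : 0 < r := div_pos hδpos (by linarith)
    have hball : ball y r ⊆ K := by
      intro z hz
      apply lem2
      intro w hw
      rw [real_inner_comm]
      have h1 : δ ≤ (inner ℝ y w : ℝ) := by simpa using hmin hw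
      have h2 : ‖w‖ ≤ M := hmax hw
      have h3 : ‖z - y‖ < r := by rwa [mem_ball, dist_eq_norm] at hz
      have h4 : (inner ℝ z w : ℝ) = (inner ℝ y w : ℝ) + (inner ℝ (z - y) w : ℝ) := by
        rw [← inner_add_left]; congr 1; abel
      have h5 : |(inner ℝ (z - y) w : ℝ)| ≤ ‖z - y‖ * ‖w‖ := abs_real_inner_le_norm _ _
      have h6 : ‖z - y‖ * ‖w‖ ≤ r * M := by
        apply mul_le_mul h3.le h2 (norm_nonneg _) hrpos.le
      have h7 : r * M < δ := by
        rw [hr, div_mul_eq_mul_div, div_lt_iff₀ (by linarith)]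
        nlinarith
      have h8 : (inner ℝ (z - y) w : ℝ) ≥ -(r * M) := by
        have := abs_le.1 h5
        linarith [this.1]
      linarith
    have hyint : y ∈ interior K :=
      mem_interior.2 ⟨ball y r, hball, isOpen_ball, mem_ball_self hrpos⟩
    have : A d ∈ (-(interior K)) ∩ Set.range A := by
      refine ⟨?_, ⟨d, rfl⟩⟩
      rw [Set.mem_neg]
      exact hyint
    rw [hemp] at this
    exact this
  · -- h nonneg → criticality
    intro hpos
    rw [Set.eq_empty_iff_forall_notMem]
    rintro v ⟨hvneg, d, rfl⟩
    have hyint : -(A d) ∈ interior K := Set.mem_neg.1 hvneg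
    have hlt : ∀ w ∈ C, (inner ℝ (A d) w : ℝ) < 0 := by
      intro w hw
      have := lem1 _ hyint w hw
      rw [inner_neg_left] at this
      linarith
    have hcont : Continuous (fun w : EuclideanSpace ℝ (Fin m) => (inner ℝ (A d) w : ℝ)) :=
      continuous_const.inner continuous_id
    obtain ⟨w₁, hw₁C, hmax⟩ := hCcomp.exists_isMaxOn hCne hcont.continuousOn
    have hsup : h x d ≤ (inner ℝ (A d) w₁ : ℝ) := by
      rw [hh]
      apply csSup_le (hCne.image _)
      rintro b ⟨w, hw, rfl⟩
      exact hmax hw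
    have := hpos d
    have := hlt w₁ hw₁C
    linarith
end

section
/- The following are equivalent: (i) x is not a K-Pareto critical point; (ii) v(x) ≠ 0; (iii) θ(x) < 0. -/
theorem noncritical_tfae {n m : ℕ}
    (K : Set (EuclideanSpace ℝ (Fin m)))
    (hKclosed : IsClosed K) (hKconv : Convex ℝ K)
    (hKcone : ∀ (c : ℝ), 0 ≤ c → ∀ x ∈ K, c • x ∈ K)
    (hKpointed : K ∩ (-K) ⊆ {0}) (hKint : (interior K).Nonempty)
    (C : Set (EuclideanSpace ℝ (Fin m)))
    (hCne : C.Nonempty) (hCcomp : IsCompact C)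
    (hCsub : C ⊆ {w | ∀ y ∈ K, 0 ≤ (inner ℝ y w : ℝ)} \ {0})
    (hCgen : {w | ∀ y ∈ K, 0 ≤ (inner ℝ y w : ℝ)} =
      {x | ∃ c : ℝ, 0 ≤ c ∧ ∃ z ∈ convexHull ℝ C, x = c • z})
    (F : EuclideanSpace ℝ (Fin n) → EuclideanSpace ℝ (Fin m))
    (hF : ContDiff ℝ 1 F)
    (h : EuclideanSpace ℝ (Fin n) → EuclideanSpace ℝ (Fin n) → ℝ)
    (hh : ∀ x d, h x d = sSup ((fun w => (inner ℝ (fderiv ℝ F x d) w : ℝ)) '' C))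
    (x : EuclideanSpace ℝ (Fin n))
    (v : EuclideanSpace ℝ (Fin n))
    (hv : ∀ d, h x v + (1 / 2) * ‖v‖ ^ 2 ≤ h x d + (1 / 2) * ‖d‖ ^ 2)
    (θ : ℝ) (hθ : θ = h x v + (1 / 2) * ‖v‖ ^ 2) :
    ((¬ ∀ d, 0 ≤ h x d) ↔ v ≠ 0) ∧ ((¬ ∀ d, 0 ≤ h x d) ↔ θ < 0) := by
  -- h x 0 = 0
  have h0 : h x 0 = 0 := by
    rw [hh]
    have : (fun w => (inner ℝ (fderiv ℝ F x 0) w : ℝ)) '' C = {0} := by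
      have : ∀ w ∈ C, (inner ℝ (fderiv ℝ F x 0) w : ℝ) = 0 := by
        intro w _
        simp [(fderiv ℝ F x).map_zero]
      rw [Set.image_congr this]
      exact hCne.image_const 0
    rw [this, csSup_singleton]
  -- subhomogeneity: h x (t • d) ≤ t * h x d for 0 ≤ t
  have hhom : ∀ (t : ℝ), 0 ≤ t → ∀ d, h x (t • d) ≤ t * h x d := by
    intro t ht d
    rw [hh, hh]
    set u := fderiv ℝ F x d with hu
    have hcont : Continuous fun w : EuclideanSpace ℝ (Fin m) => (inner ℝ u w : ℝ) :=
      continuous_const.inner continuous_id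
    have hbdd : BddAbove ((fun w => (inner ℝ u w : ℝ)) '' C) :=
      (hCcomp.image hcont).bddAbove
    apply csSup_le (hCne.image _)
    rintro y ⟨w, hw, rfl⟩
    dsimp only
    have : (inner ℝ (fderiv ℝ F x (t • d)) w : ℝ) = t * inner ℝ u w := by
      rw [(fderiv ℝ F x).map_smul, real_inner_smul_left]
    rw [this]
    exact mul_le_mul_of_nonneg_left (le_csSup hbdd ⟨w, hw, rfl⟩) ht
  -- θ ≤ 0
  have hθ0 : θ ≤ 0 := by
    have := hv 0
    simp [h0] at this
    linarith [hθ]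
  -- ¬critical → θ < 0
  have h1 : (¬ ∀ d, 0 ≤ h x d) → θ < 0 := by
    intro hc
    push_neg at hc
    obtain ⟨d, hd⟩ := hc
    have hdne : d ≠ 0 := by
      rintro rfl; rw [h0] at hd; linarith
    have hnd : (0:ℝ) < ‖d‖ ^ 2 := pow_pos (norm_pos_iff.mpr hdne) 2
    set t : ℝ := -h x d / ‖d‖ ^ 2 with htdef
    have ht : 0 < t := div_pos (by linarith) hnd
    have key : h x (t • d) + (1/2) * ‖t • d‖ ^ 2 ≤ t * h x d / 2 := by
      have h2 : ‖t • d‖ ^ 2 = t ^ 2 * ‖d‖ ^ 2 := by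
        rw [norm_smul]; rw [mul_pow]
        simp [abs_of_pos ht]
      have h3 : t * ‖d‖ ^ 2 = -h x d := by
        rw [htdef, div_mul_cancel₀ _ hnd.ne']
      have := hhom t ht.le d
      nlinarith
    have := hv (t • d)
    rw [← hθ] at this
    nlinarith
  -- θ < 0 → v ≠ 0
  have h2 : θ < 0 → v ≠ 0 := by
    rintro hlt rfl
    rw [hθ, h0] at hlt
    simp at hlt
  -- v ≠ 0 → ¬critical
  have h3 : v ≠ 0 → ¬ ∀ d, 0 ≤ h x d := by
    intro hvne hc
    have hvn : (0:ℝ) < ‖v‖ ^ 2 := pow_pos (norm_pos_iff.mpr hvne) 2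
    have := hv 0
    simp [h0] at this
    have := hc v
    linarith
  exact ⟨⟨fun hc => h2 (h1 hc), fun hvne => h3 hvne⟩,
    ⟨h1, fun hlt => h3 (h2 hlt)⟩⟩
end

section
/- For all k ≥ 0, the direction d^k generated by the modified PRP-type conjugate gradient method satisfies the sufficient descent condition h(x^k, d^k) ≤ (1 − 2/μ) h(x^k, v(x^k)), where μ > 2. -/
open scoped Pointwise


theorem mprp_sufficient_descent {n m : ℕ}
    (C : Set (EuclideanSpace ℝ (Fin m)))
    (hCne : C.Nonempty) (hCcomp : IsCompact C)
    (F : EuclideanSpace ℝ (Fin n) → EuclideanSpace ℝ (Fin m))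
    (hF : ContDiff ℝ 1 F)
    (h : EuclideanSpace ℝ (Fin n) → EuclideanSpace ℝ (Fin n) → ℝ)
    (hh : ∀ x d, h x d = sSup ((fun w => (inner ℝ (fderiv ℝ F x d) w : ℝ)) '' C))
    (μ : ℝ) (hμ : 2 < μ)
    (x v d : ℕ → EuclideanSpace ℝ (Fin n)) (β : ℕ → ℝ)
    (hv : ∀ k, ∀ d', h (x k) (v k) + (1 / 2) * ‖v k‖ ^ 2 ≤ h (x k) d' + (1 / 2) * ‖d'‖ ^ 2)
    (hneg : ∀ k, h (x k) (v k) < 0)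
    (hβ : ∀ k ≥ 1, β k =
      (-(h (x k) (v k)) * (|h (x (k - 1)) (v k)| + h (x (k - 1)) (v k))) /
        max (μ * |h (x k) (d (k - 1)) * h (x (k - 1)) (v k)|)
          (-(μ * h (x (k - 1)) (v (k - 1))) * |h (x (k - 1)) (v k)|))
    (hd0 : d 0 = v 0)
    (hd : ∀ k ≥ 1, d k = v k + β k • d (k - 1)) :
    ∀ k, h (x k) (d k) ≤ (1 - 2 / μ) * h (x k) (v k) := by
  have hμ0 : (0:ℝ) < μ := by linarith
  -- boundedness of the image sets
  have hbdd : ∀ (x₀ d₀ : EuclideanSpace ℝ (Fin n)),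
      BddAbove ((fun w => (inner ℝ (fderiv ℝ F x₀ d₀) w : ℝ)) '' C) := by
    intro x₀ d₀
    exact (hCcomp.image (Continuous.inner continuous_const continuous_id)).bddAbove
  have hne : ∀ (x₀ d₀ : EuclideanSpace ℝ (Fin n)),
      ((fun w => (inner ℝ (fderiv ℝ F x₀ d₀) w : ℝ)) '' C).Nonempty := fun _ _ => hCne.image _
  -- subadditivity
  have hsub : ∀ x₀ a b, h x₀ (a + b) ≤ h x₀ a + h x₀ b := by
    intro x₀ a b
    rw [hh, hh, hh]
    apply csSup_le (hne x₀ (a + b))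
    rintro _ ⟨w, hw, rfl⟩
    simp only []
    have : (inner ℝ (fderiv ℝ F x₀ (a + b)) w : ℝ)
        = (inner ℝ (fderiv ℝ F x₀ a) w : ℝ) + (inner ℝ (fderiv ℝ F x₀ b) w : ℝ) := by
      rw [map_add, inner_add_left]
    rw [this]
    exact add_le_add (le_csSup (hbdd x₀ a) ⟨w, hw, rfl⟩) (le_csSup (hbdd x₀ b) ⟨w, hw, rfl⟩)
  -- positive homogeneity
  have hhom : ∀ x₀ d₀ (c : ℝ), 0 ≤ c → h x₀ (c • d₀) = c * h x₀ d₀ := by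
    intro x₀ d₀ c hc
    rw [hh, hh]
    have himg : (fun w => (inner ℝ (fderiv ℝ F x₀ (c • d₀)) w : ℝ)) '' C
        = c • ((fun w => (inner ℝ (fderiv ℝ F x₀ d₀) w : ℝ)) '' C) := by
      rw [← Set.image_smul, Set.image_image]
      apply Set.image_congr
      intro w _
      rw [map_smul, inner_smul_left]
      simp [smul_eq_mul]
    rw [himg, Real.sSup_smul_of_nonneg hc]
    simp [smul_eq_mul]
  intro k
  rcases Nat.eq_zero_or_pos k with rfl | hk
  · rw [hd0]
    have hq : 0 < 2 / μ * (-(h (x 0) (v 0))) := mul_pos (by positivity) (by linarith [hneg 0])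
    nlinarith [hq]
  · have hk1 : k ≥ 1 := hk
    set A := h (x k) (v k) with hA
    set B := h (x k) (d (k - 1)) with hB
    set a := h (x (k - 1)) (v k) with ha
    set p := h (x (k - 1)) (v (k - 1)) with hp
    have hA0 : A < 0 := hneg k
    have hp0 : p < 0 := hneg (k - 1)
    have hβk : β k = (-A * (|a| + a)) / max (μ * |B * a|) (-(μ * p) * |a|) := hβ k hk1
    have hβnn : 0 ≤ β k := by
      rw [hβk]
      apply div_nonneg
      · have : 0 ≤ |a| + a := by cases abs_cases a <;> nlinarith [abs_nonneg a]
        nlinarith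
      · refine le_trans ?_ (le_max_right _ _)
        exact mul_nonneg (by nlinarith) (abs_nonneg a)
    have hq : 0 < 2 / μ * (-A) := mul_pos (by positivity) (by linarith)
    have hstep : h (x k) (d k) ≤ A + β k * B := by
      rw [hd k hk1]
      calc h (x k) (v k + β k • d (k - 1)) ≤ h (x k) (v k) + h (x k) (β k • d (k - 1)) :=
            hsub _ _ _
        _ = A + β k * B := by rw [hhom _ _ _ hβnn]
    have hgoal : β k * B ≤ -(2 / μ) * A := by
      rcases le_or_gt a 0 with ha0 | ha0
      · have : |a| + a = 0 := by rw [abs_of_nonpos ha0]; ring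
        rw [hβk, this]
        simp only [mul_zero, zero_div, zero_mul]
        nlinarith [hq]
      · rcases le_or_gt B 0 with hB0 | hB0
        · have : β k * B ≤ 0 := mul_nonpos_of_nonneg_of_nonpos hβnn hB0
          nlinarith [hq]
        · -- B > 0, a > 0
          have hDpos : 0 < μ * |B * a| := by
            rw [abs_of_pos (mul_pos hB0 ha0)]
            positivity
          have hDle : μ * |B * a| ≤ max (μ * |B * a|) (-(μ * p) * |a|) := le_max_left _ _
          have hnum : -A * (|a| + a) = -A * (2 * a) := by rw [abs_of_pos ha0]; ring
          have hβle : β k ≤ (-A * (2 * a)) / (μ * |B * a|) := by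
            rw [hβk, hnum]
            apply div_le_div_of_nonneg_left _ hDpos hDle
            nlinarith [hq]
          have hval : (-A * (2 * a)) / (μ * |B * a|) * B = -(2 / μ) * A := by
            rw [abs_of_pos (mul_pos hB0 ha0)]
            field_simp
          calc β k * B ≤ (-A * (2 * a)) / (μ * |B * a|) * B :=
                mul_le_mul_of_nonneg_right hβle (le_of_lt hB0)
            _ = -(2 / μ) * A := hval
    calc h (x k) (d k) ≤ A + β k * B := hstep
      _ ≤ A + -(2 / μ) * A := by linarith
      _ = (1 - 2 / μ) * A := by ring
end
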